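/- If x is a real irrational root of a quadratic equation x² + px + q = 0 with integer coefficients p, q, then the continued fraction expansion of x is eventually periodic. -/

import Mathlib

/-- The sequence of complete quotients of the continued fraction algorithm. -/
noncomputable def cq (x : ℝ) : ℕ → ℝ
  | 0 => x
  | n + 1 => (Int.fract (cq x n))⁻¹

/-- The `n`-th digit of the continued fraction expansion of `x`. -/
noncomputable def cfDigit (x : ℝ) (n : ℕ) : ℤ := ⌊cq x n⌋

namespace CFLagrange

/-- Numerators of convergents (shifted index). -/
noncomputable def Hh (x : ℝ) : ℕ → ℤ
  | 0 => 1
  | 1 => cfDigit x 0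
  | n + 2 => cfDigit x (n + 1) * Hh x (n + 1) + Hh x n

/-- Denominators of convergents (shifted index). -/
noncomputable def Kk (x : ℝ) : ℕ → ℤ
  | 0 => 0
  | 1 => 1
  | n + 2 => cfDigit x (n + 1) * Kk x (n + 1) + Kk x n

lemma fract_irrational {y : ℝ} (hy : Irrational y) : Irrational (Int.fract y) := by
  rw [← Int.self_sub_floor]
  exact hy.sub_intCast _

lemma fract_pos {y : ℝ} (hy : Irrational y) : 0 < Int.fract y := by
  rcases lt_or_eq_of_le (Int.fract_nonneg y) with h | h
  · exact h
  · exact absurd h.symm (fract_irrational hy).ne_zero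

lemma cq_irrational {x : ℝ} (hx : Irrational x) : ∀ n, Irrational (cq x n)
  | 0 => hx
  | n + 1 => by
      show Irrational (Int.fract (cq x n))⁻¹
      exact (fract_irrational (cq_irrational hx n)).inv

lemma cq_gt_one {x : ℝ} (hx : Irrational x) (n : ℕ) : 1 < cq x (n + 1) := by
  show 1 < (Int.fract (cq x n))⁻¹
  exact (one_lt_inv₀ (fract_pos (cq_irrational hx n))).2 (Int.fract_lt_one _)

lemma cfDigit_pos {x : ℝ} (hx : Irrational x) (n : ℕ) : 1 ≤ cfDigit x (n + 1) := by
  rw [cfDigit]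
  exact Int.le_floor.2 (by exact_mod_cast (cq_gt_one hx n).le)

/-- Key recurrence. -/
lemma cq_rec {x : ℝ} (hx : Irrational x) (n : ℕ) :
    cq x n * cq x (n + 1) = (cfDigit x n : ℝ) * cq x (n + 1) + 1 := by
  have hf : Int.fract (cq x n) ≠ 0 := (fract_pos (cq_irrational hx n)).ne'
  have h1 : cq x (n + 1) * Int.fract (cq x n) = 1 := by
    show (Int.fract (cq x n))⁻¹ * Int.fract (cq x n) = 1
    exact inv_mul_cancel₀ hf
  have h2 : Int.fract (cq x n) = cq x n - (cfDigit x n : ℝ) := by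
    rw [cfDigit, ← Int.self_sub_floor]
  rw [h2] at h1
  linear_combination h1

lemma main_id {x : ℝ} (hx : Irrational x) : ∀ n : ℕ,
    x * ((Kk x (n + 1) : ℝ) * cq x (n + 1) + (Kk x n : ℝ))
      = (Hh x (n + 1) : ℝ) * cq x (n + 1) + (Hh x n : ℝ)
  | 0 => by
      have h := cq_rec hx 0
      have h0 : cq x 0 = x := rfl
      rw [h0] at h
      simp only [Hh, Kk]
      push_cast
      linear_combination h
  | n + 1 => by
      have IH := main_id hx n
      have hr := cq_rec hx (n + 1)
      simp only [Hh, Kk]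
      push_cast
      linear_combination (cq x (n + 2)) * IH
        - (x * (Kk x (n + 1) : ℝ) - (Hh x (n + 1) : ℝ)) * hr

lemma det_id (x : ℝ) : ∀ n : ℕ,
    Hh x (n + 1) * Kk x n - Hh x n * Kk x (n + 1) = (-1) ^ (n + 1)
  | 0 => by simp [Hh, Kk]
  | n + 1 => by
      have IH := det_id x n
      simp only [Hh, Kk, pow_succ]
      linear_combination (-1 : ℤ) * IH

lemma Kk_pos {x : ℝ} (hx : Irrational x) : ∀ n : ℕ, 0 ≤ Kk x n ∧ 1 ≤ Kk x (n + 1)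
  | 0 => by simp [Kk]
  | n + 1 => by
      obtain ⟨IH1, IH2⟩ := Kk_pos hx n
      have ha := cfDigit_pos hx n
      refine ⟨by linarith, ?_⟩
      simp only [Kk]
      nlinarith

lemma Kk_pos' {x : ℝ} (hx : Irrational x) (n : ℕ) : 1 ≤ Kk x (n + 1) := (Kk_pos hx n).2

lemma eps_id {x : ℝ} (hx : Irrational x) (n : ℕ) :
    (x * (Kk x (n + 1) : ℝ) - (Hh x (n + 1) : ℝ))
      * ((Kk x (n + 1) : ℝ) * cq x (n + 1) + (Kk x n : ℝ)) = -(-1 : ℝ) ^ (n + 1) := by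
  have hd := congrArg (fun z : ℤ => (z : ℝ)) (det_id x n)
  push_cast at hd
  linear_combination (Kk x (n + 1) : ℝ) * main_id hx n - hd

/-- denominator is positive and bigger than `Kk (n+1)`. -/
lemma denom_gt {x : ℝ} (hx : Irrational x) (n : ℕ) :
    (Kk x (n + 1) : ℝ) < (Kk x (n + 1) : ℝ) * cq x (n + 1) + (Kk x n : ℝ) := by
  have h1 : (1 : ℝ) ≤ (Kk x (n + 1) : ℝ) := by exact_mod_cast Kk_pos' hx n
  have h2 : (0 : ℝ) ≤ (Kk x n : ℝ) := by exact_mod_cast (Kk_pos hx n).1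
  nlinarith [cq_gt_one hx n]

lemma eps_abs {x : ℝ} (hx : Irrational x) (n : ℕ) :
    |x * (Kk x (n + 1) : ℝ) - (Hh x (n + 1) : ℝ)|
      * ((Kk x (n + 1) : ℝ) * cq x (n + 1) + (Kk x n : ℝ)) = 1 := by
  have h := congrArg abs (eps_id hx n)
  have h1 : (1 : ℝ) ≤ (Kk x (n + 1) : ℝ) := by exact_mod_cast Kk_pos' hx n
  have hpos : (0 : ℝ) < (Kk x (n + 1) : ℝ) * cq x (n + 1) + (Kk x n : ℝ) :=
    lt_trans (by linarith) (denom_gt hx n)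
  rw [abs_mul, abs_of_pos hpos] at h
  rw [h, abs_neg, abs_pow, abs_neg, abs_one, one_pow]

lemma eps_K_lt_one {x : ℝ} (hx : Irrational x) (n : ℕ) :
    |x * (Kk x (n + 1) : ℝ) - (Hh x (n + 1) : ℝ)| * (Kk x (n + 1) : ℝ) < 1 ∧
    |x * (Kk x (n + 1) : ℝ) - (Hh x (n + 1) : ℝ)| < 1 := by
  set e := |x * (Kk x (n + 1) : ℝ) - (Hh x (n + 1) : ℝ)| with he
  set d := (Kk x (n + 1) : ℝ) * cq x (n + 1) + (Kk x n : ℝ) with hd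
  have h : e * d = 1 := eps_abs hx n
  have hdg : (Kk x (n + 1) : ℝ) < d := denom_gt hx n
  have h1 : (1 : ℝ) ≤ (Kk x (n + 1) : ℝ) := by exact_mod_cast Kk_pos' hx n
  have hene : e ≠ 0 := by
    intro h0; rw [h0, zero_mul] at h; exact absurd h (by norm_num)
  have habs : 0 < e :=
    lt_of_le_of_ne (by rw [he]; exact abs_nonneg _) (Ne.symm hene)
  constructor
  · have := (mul_lt_mul_iff_right₀ habs).2 hdg
    linarith
  · have := (mul_lt_mul_iff_right₀ habs).2 (lt_of_le_of_lt h1 hdg)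
    rw [mul_one] at this
    linarith

/-- The quadratic form value at the convergents. -/
noncomputable def Aq (x : ℝ) (p q : ℤ) (n : ℕ) : ℤ :=
  Hh x n ^ 2 + p * Hh x n * Kk x n + q * Kk x n ^ 2

noncomputable def Bq (x : ℝ) (p q : ℤ) (n : ℕ) : ℤ :=
  2 * Hh x (n + 1) * Hh x n + p * (Hh x (n + 1) * Kk x n + Hh x n * Kk x (n + 1))
    + 2 * q * Kk x (n + 1) * Kk x n

lemma Aq_real {x : ℝ} {p q : ℤ} (hroot : x ^ 2 + (p : ℝ) * x + (q : ℝ) = 0) (n : ℕ) :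
    (Aq x p q n : ℝ) = ((Hh x n : ℝ) - x * (Kk x n : ℝ))
      * ((Hh x n : ℝ) - (-(p : ℝ) - x) * (Kk x n : ℝ)) := by
  simp only [Aq]
  push_cast
  linear_combination ((Kk x n : ℝ) ^ 2) * hroot

lemma Aq_bound {x : ℝ} {p q : ℤ} (hx : Irrational x)
    (hroot : x ^ 2 + (p : ℝ) * x + (q : ℝ) = 0) (n : ℕ) :
    |(Aq x p q (n + 1) : ℝ)| ≤ 1 + |2 * x + (p : ℝ)| := by
  have hA := Aq_real hroot (n + 1)
  set e := x * (Kk x (n + 1) : ℝ) - (Hh x (n + 1) : ℝ) with he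
  have h1 : (1 : ℝ) ≤ (Kk x (n + 1) : ℝ) := by exact_mod_cast Kk_pos' hx n
  obtain ⟨hek0, he10⟩ := eps_K_lt_one hx n
  have hek : |e| * (Kk x (n + 1) : ℝ) < 1 := hek0
  have he1 : |e| < 1 := he10
  have h3 : (Hh x (n + 1) : ℝ) - x * (Kk x (n + 1) : ℝ) = -e := by rw [he]; ring
  have hf2 : (Hh x (n + 1) : ℝ) - (-(p : ℝ) - x) * (Kk x (n + 1) : ℝ)
      = -e + (2 * x + (p : ℝ)) * (Kk x (n + 1) : ℝ) := by rw [he]; ring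
  rw [hA, h3, hf2, abs_mul, abs_neg]
  have h4 : |(-e + (2 * x + (p : ℝ)) * (Kk x (n + 1) : ℝ))|
      ≤ |e| + |2 * x + (p : ℝ)| * (Kk x (n + 1) : ℝ) := by
    calc |(-e + (2 * x + (p : ℝ)) * (Kk x (n + 1) : ℝ))|
        ≤ |(-e)| + |(2 * x + (p : ℝ)) * (Kk x (n + 1) : ℝ)| := abs_add_le _ _
      _ = |e| + |2 * x + (p : ℝ)| * (Kk x (n + 1) : ℝ) := by
          have hKabs : |((Kk x (n + 1) : ℤ) : ℝ)| = ((Kk x (n + 1) : ℤ) : ℝ) :=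
            abs_of_pos (by linarith)
          rw [abs_neg, abs_mul, hKabs]
  calc |e| * |(-e + (2 * x + (p : ℝ)) * (Kk x (n + 1) : ℝ))|
      ≤ |e| * (|e| + |2 * x + (p : ℝ)| * (Kk x (n + 1) : ℝ)) :=
        mul_le_mul_of_nonneg_left h4 (abs_nonneg _)
    _ = |e| * |e| + |2 * x + (p : ℝ)| * (|e| * (Kk x (n + 1) : ℝ)) := by ring
    _ ≤ 1 + |2 * x + (p : ℝ)| := by
        have h6 : 0 ≤ |e| := abs_nonneg _
        have h7 : 0 ≤ |2 * x + (p : ℝ)| := abs_nonneg _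
        have h8 : 0 ≤ |e| * (Kk x (n + 1) : ℝ) := by positivity
        nlinarith

lemma not_mul_int_eq {x : ℝ} (hx : Irrational x) {h k : ℤ} (hk : k ≠ 0) :
    x * (k : ℝ) ≠ (h : ℝ) := by
  intro he
  have hk' : (k : ℝ) ≠ 0 := Int.cast_ne_zero.2 hk
  have hxe : x = (((h : ℚ) / (k : ℚ) : ℚ) : ℝ) := by
    push_cast
    rw [eq_div_iff hk']
    exact he
  exact Rat.not_irrational _ (hxe ▸ hx)

lemma Aq_ne_zero {x : ℝ} {p q : ℤ} (hx : Irrational x)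
    (hroot : x ^ 2 + (p : ℝ) * x + (q : ℝ) = 0) (n : ℕ) :
    Aq x p q (n + 1) ≠ 0 := by
  intro h0
  have hA := Aq_real hroot (n + 1)
  rw [h0] at hA
  push_cast at hA
  have hk : Kk x (n + 1) ≠ 0 := by have := Kk_pos' hx n; omega
  rcases mul_eq_zero.mp hA.symm with h | h
  · exact not_mul_int_eq hx hk (h := Hh x (n + 1)) (by linarith)
  · have hx' : Irrational (-(p : ℝ) - x) := by
      have := hx.intCast_sub (-p)
      push_cast at this
      exact this
    exact not_mul_int_eq hx' hk (h := Hh x (n + 1)) (by linarith)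

lemma root_eq {x : ℝ} {p q : ℤ} (hx : Irrational x)
    (hroot : x ^ 2 + (p : ℝ) * x + (q : ℝ) = 0) (n : ℕ) :
    (Aq x p q (n + 1) : ℝ) * cq x (n + 1) ^ 2 + (Bq x p q n : ℝ) * cq x (n + 1)
      + (Aq x p q n : ℝ) = 0 := by
  have hd := main_id hx n
  simp only [Aq, Bq]
  push_cast
  linear_combination ((Kk x (n + 1) : ℝ) * cq x (n + 1) + (Kk x n : ℝ)) ^ 2 * hroot
    - ((Hh x (n + 1) : ℝ) * cq x (n + 1) + (Hh x n : ℝ)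
       + x * ((Kk x (n + 1) : ℝ) * cq x (n + 1) + (Kk x n : ℝ))
       + (p : ℝ) * ((Kk x (n + 1) : ℝ) * cq x (n + 1) + (Kk x n : ℝ))) * hd

lemma disc_id (x : ℝ) (p q : ℤ) (n : ℕ) :
    Bq x p q n ^ 2 - 4 * Aq x p q (n + 1) * Aq x p q n = p ^ 2 - 4 * q := by
  have hdet := det_id x n
  have h2 : (Hh x (n + 1) * Kk x n - Hh x n * Kk x (n + 1)) ^ 2 = 1 := by
    rw [hdet, ← pow_mul]
    exact Even.neg_one_pow ⟨n + 1, by ring⟩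
  simp only [Aq, Bq]
  linear_combination (p ^ 2 - 4 * q) * h2

lemma cq_shift (x : ℝ) {m n : ℕ} (h : cq x m = cq x n) :
    ∀ i : ℕ, cq x (m + i) = cq x (n + i)
  | 0 => h
  | i + 1 => by
      show (Int.fract (cq x (m + i)))⁻¹ = (Int.fract (cq x (n + i)))⁻¹
      rw [cq_shift x h i]

lemma two_roots_eq {a b c y1 y2 y3 : ℝ} (ha : a ≠ 0)
    (h1 : a * y1 ^ 2 + b * y1 + c = 0) (h2 : a * y2 ^ 2 + b * y2 + c = 0)
    (h3 : a * y3 ^ 2 + b * y3 + c = 0) : y1 = y2 ∨ y1 = y3 ∨ y2 = y3 := by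
  by_cases e12 : y1 = y2
  · exact Or.inl e12
  by_cases e13 : y1 = y3
  · exact Or.inr (Or.inl e13)
  right; right
  have d12 : a * (y1 + y2) + b = 0 := by
    have hz : (y1 - y2) * (a * (y1 + y2) + b) = 0 := by linear_combination h1 - h2
    rcases mul_eq_zero.mp hz with h | h
    · exact absurd (sub_eq_zero.mp h) e12
    · exact h
  have d13 : a * (y1 + y3) + b = 0 := by
    have hz : (y1 - y3) * (a * (y1 + y3) + b) = 0 := by linear_combination h1 - h3
    rcases mul_eq_zero.mp hz with h | h
    · exact absurd (sub_eq_zero.mp h) e13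
    · exact h
  have hm : a * y2 = a * y3 := by linarith
  exact mul_left_cancel₀ ha hm

lemma int_abs_le_sq_add_one (b : ℤ) (R : ℤ) (h : b ^ 2 ≤ R) : |b| ≤ R + 1 := by
  nlinarith [sq_nonneg (|b| - 1), sq_abs b, abs_nonneg b]

end CFLagrange

open CFLagrange in
/-- If `x` is a real irrational root of `x² + px + q = 0` with integer `p, q`,
then its continued fraction expansion is eventually periodic. -/
theorem cf_of_quadratic_irrational_eventually_periodic
    (x : ℝ) (p q : ℤ) (hirr : Irrational x)
    (hroot : x ^ 2 + (p : ℝ) * x + (q : ℝ) = 0) :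
    ∃ N k : ℕ, 1 ≤ k ∧ ∀ n ≥ N, cfDigit x (n + k) = cfDigit x n := by
  -- it suffices to find two equal complete quotients
  have final : ∀ m n : ℕ, m < n → cq x m = cq x n →
      ∃ N k : ℕ, 1 ≤ k ∧ ∀ j ≥ N, cfDigit x (j + k) = cfDigit x j := by
    intro m n hmn hcq
    refine ⟨m, n - m, by omega, ?_⟩
    intro j hj
    have hshift := cq_shift x hcq (j - m)
    have h1 : m + (j - m) = j := by omega
    have h2 : n + (j - m) = j + (n - m) := by omega
    rw [h1, h2] at hshift
    rw [cfDigit, cfDigit, ← hshift]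
  -- integer bound M on the leading coefficients
  set M : ℤ := ⌈(1 : ℝ) + |2 * x + (p : ℝ)|⌉ with hM
  have hMc : (1 : ℝ) + |2 * x + (p : ℝ)| ≤ (M : ℝ) := Int.le_ceil _
  have hM1 : 1 ≤ M := by
    have h0 : (1 : ℝ) ≤ (M : ℝ) := le_trans (by linarith [abs_nonneg (2 * x + (p : ℝ))]) hMc
    exact_mod_cast h0
  have hAall : ∀ n : ℕ, |Aq x p q n| ≤ M := by
    intro n
    match n with
    | 0 =>
      have h0 : Aq x p q 0 = 1 := by simp [Aq, Hh, Kk]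
      rw [h0]; simpa using hM1
    | n + 1 =>
      have h := (Aq_bound hirr hroot n).trans hMc
      have h2 : ((|Aq x p q (n + 1)| : ℤ) : ℝ) ≤ (M : ℝ) := by
        rwa [Int.cast_abs]
      exact_mod_cast h2
  set L : ℤ := p ^ 2 + 4 * |q| + 4 * M ^ 2 + M + 1 with hL
  have hAL : ∀ n, |Aq x p q n| ≤ L := by
    intro n
    have := hAall n
    have hq : 0 ≤ |q| := abs_nonneg q
    nlinarith [sq_nonneg p, sq_nonneg M]
  have hBL : ∀ n, |Bq x p q n| ≤ L := by
    intro n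
    have hd := disc_id x p q n
    have h1 := hAall (n + 1)
    have h2 := hAall n
    have h1' : 0 ≤ |Aq x p q (n + 1)| := abs_nonneg _
    have h2' : 0 ≤ |Aq x p q n| := abs_nonneg _
    have hprod : Aq x p q (n + 1) * Aq x p q n ≤ M ^ 2 := by
      calc Aq x p q (n + 1) * Aq x p q n ≤ |Aq x p q (n + 1) * Aq x p q n| := le_abs_self _
        _ = |Aq x p q (n + 1)| * |Aq x p q n| := abs_mul _ _
        _ ≤ M * M := mul_le_mul h1 h2 h2' (by linarith)
        _ = M ^ 2 := by ring
    have hsq : Bq x p q n ^ 2 ≤ p ^ 2 + 4 * |q| + 4 * M ^ 2 := by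
      have hq := le_abs_self q
      have hq2 := neg_abs_le q
      nlinarith
    have := int_abs_le_sq_add_one (Bq x p q n) _ hsq
    linarith
  -- pigeonhole
  set g : ℕ → ℤ × ℤ × ℤ := fun n => (Aq x p q (n + 1), Bq x p q n, Aq x p q n) with hg
  set S : Finset (ℤ × ℤ × ℤ) := Finset.Icc (-L, -L, -L) (L, L, L) with hS
  have hmem : ∀ n, g n ∈ S := by
    intro n
    simp only [hS, hg, Finset.mem_Icc, Prod.mk_le_mk]
    obtain ⟨a1, a2⟩ := abs_le.mp (hAL (n + 1))
    obtain ⟨b1, b2⟩ := abs_le.mp (hBL n)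
    obtain ⟨c1, c2⟩ := abs_le.mp (hAL n)
    exact ⟨⟨a1, b1, c1⟩, a2, b2, c2⟩
  obtain ⟨v, hv⟩ := Finite.exists_infinite_fiber (fun n : ℕ => (⟨g n, hmem n⟩ : {t // t ∈ S}))
  have hinf : {n : ℕ | g n = (v : ℤ × ℤ × ℤ)}.Infinite := by
    have h := Set.infinite_coe_iff.mp hv
    refine h.mono ?_
    intro n hn
    simp only [Set.mem_preimage, Set.mem_singleton_iff] at hn
    simpa [Set.mem_setOf_eq] using congrArg Subtype.val hn
  obtain ⟨n₁, hn₁⟩ := hinf.nonempty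
  obtain ⟨n₂, hn₂, h12⟩ := hinf.exists_gt n₁
  obtain ⟨n₃, hn₃, h23⟩ := hinf.exists_gt n₂
  simp only [Set.mem_setOf_eq] at hn₁ hn₂ hn₃
  have c12 : g n₁ = g n₂ := hn₁.trans hn₂.symm
  have c13 : g n₁ = g n₃ := hn₁.trans hn₃.symm
  rw [hg] at c12 c13
  simp only [Prod.mk.injEq] at c12 c13
  obtain ⟨cA2, cB2, cC2⟩ := c12
  obtain ⟨cA3, cB3, cC3⟩ := c13
  have e1 := root_eq hirr hroot n₁
  have e2 := root_eq hirr hroot n₂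
  have e3 := root_eq hirr hroot n₃
  rw [← cA2, ← cB2, ← cC2] at e2
  rw [← cA3, ← cB3, ← cC3] at e3
  have ha : ((Aq x p q (n₁ + 1) : ℤ) : ℝ) ≠ 0 :=
    Int.cast_ne_zero.2 (Aq_ne_zero hirr hroot n₁)
  rcases two_roots_eq ha e1 e2 e3 with h | h | h
  · exact final (n₁ + 1) (n₂ + 1) (by omega) h
  · exact final (n₁ + 1) (n₃ + 1) (by omega) h
  · exact final (n₂ + 1) (n₃ + 1) (by omega) h
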